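/- Let Φ be a finite root system with affine root system Φ̂, let S ⊂ Φ be a strongly orthogonal subset such that Σ_{β∈S} |⟨η, β^∨⟩| ≤ 3 for every root η ∈ Φ (i.e., the nilpotent e_S has height at most 3), and set Ŝ = {β − δ : β ∈ S}. If α ∈ Φ̂ satisfies σ_Ŝ(α) = −α, where σ_Ŝ = Π_{β∈S} s_{β−δ}, then α = ½(±β ± β′) for some β, β′ ∈ Ŝ. -/

import Mathlib

open scoped Classical RealInnerProductSpace

/-- The pairing `⟨γ, α^∨⟩ = 2(γ,α)/(α,α)`. -/
noncomputable def pairing {V : Type*} [NormedAddCommGroup V] [InnerProductSpace ℝ V]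
    (γ α : V) : ℝ :=
  2 * ⟪γ, α⟫ / ⟪α, α⟫

/-- A finite (crystallographic, reduced) root system in a Euclidean space. -/
structure IsRootSystem {V : Type*} [NormedAddCommGroup V] [InnerProductSpace ℝ V]
    (Φ : Set V) : Prop where
  finite : Φ.Finite
  ne_zero : ∀ α ∈ Φ, α ≠ 0
  neg_mem : ∀ α ∈ Φ, -α ∈ Φ
  reflect_mem : ∀ α ∈ Φ, ∀ β ∈ Φ, β - pairing β α • α ∈ Φ
  crystal : ∀ α ∈ Φ, ∀ β ∈ Φ, ∃ n : ℤ, pairing β α = n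
  reduced : ∀ α ∈ Φ, ∀ t : ℝ, t • α ∈ Φ → t = 1 ∨ t = -1

/-- Irreducibility of a root system: no nontrivial orthogonal decomposition. -/
def IsIrreducibleRS {V : Type*} [NormedAddCommGroup V] [InnerProductSpace ℝ V]
    (Φ : Set V) : Prop :=
  ∀ Φ₁ Φ₂ : Set V, Φ = Φ₁ ∪ Φ₂ → (∀ α ∈ Φ₁, ∀ β ∈ Φ₂, ⟪α, β⟫ = 0) → Φ₁ = ∅ ∨ Φ₂ = ∅

/-- A set of roots is strongly orthogonal if for any two distinct elements neither the sum
nor the difference is a root. -/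
def StronglyOrthogonal {V : Type*} [NormedAddCommGroup V] [InnerProductSpace ℝ V]
    (Φ : Set V) (S : Set V) : Prop :=
  ∀ α ∈ S, ∀ β ∈ S, α ≠ β → α + β ∉ Φ ∧ α - β ∉ Φ

/-- A set of pairwise orthogonal vectors. -/
def OrthogonalSet {V : Type*} [NormedAddCommGroup V] [InnerProductSpace ℝ V]
    (S : Set V) : Prop :=
  ∀ α ∈ S, ∀ β ∈ S, α ≠ β → ⟪α, β⟫ = 0

/-- A base (set of simple roots) of a root system. -/
structure IsBase {V : Type*} [NormedAddCommGroup V] [InnerProductSpace ℝ V]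
    (Φ : Set V) (Δ : Finset V) : Prop where
  subset : ↑Δ ⊆ Φ
  indep : LinearIndependent ℝ (fun b : Δ => (b : V))
  pos_or_neg : ∀ α ∈ Φ, (∃ c : V → ℕ, α = ∑ b ∈ Δ, (c b : ℝ) • b) ∨
    (∃ c : V → ℕ, -α = ∑ b ∈ Δ, (c b : ℝ) • b)

/-- The positive roots with respect to a base. -/
def PosRoots {V : Type*} [NormedAddCommGroup V] [InnerProductSpace ℝ V]
    (Φ : Set V) (Δ : Finset V) : Set V :=
  {α | α ∈ Φ ∧ ∃ c : V → ℕ, α = ∑ b ∈ Δ, (c b : ℝ) • b}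

/-- `θ` is the highest root of `Φ` with respect to the base `Δ`. -/
def IsHighestRoot {V : Type*} [NormedAddCommGroup V] [InnerProductSpace ℝ V]
    (Φ : Set V) (Δ : Finset V) (θ : V) : Prop :=
  θ ∈ Φ ∧ ∀ α ∈ Φ, ∃ c : V → ℕ, θ - α = ∑ b ∈ Δ, (c b : ℝ) • b

/-- The coroot of the real affine root `(β, n) = β + nδ`, as a linear functional on the affine
root space `V × ℝδ` (it kills `δ`). -/
noncomputable def acoroot {V : Type*} [NormedAddCommGroup V] [InnerProductSpace ℝ V]
    (β : V) : (V × ℝ) →ₗ[ℝ] ℝ :=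
  (2 / ⟪β, β⟫) • ((innerSL ℝ β).toLinearMap ∘ₗ LinearMap.fst ℝ V ℝ)

/-- The reflection of the affine Weyl group corresponding to the real affine root
`β + nδ`, acting linearly on the affine root space `V ⊕ ℝδ`. -/
noncomputable def sAff {V : Type*} [NormedAddCommGroup V] [InnerProductSpace ℝ V]
    (β : V) (n : ℝ) : Module.End ℝ (V × ℝ) :=
  LinearMap.id - LinearMap.smulRight (acoroot β) ((β, n) : V × ℝ)

/-- The set of reflections of the affine Weyl group of `Φ`. -/
def AffRefls {V : Type*} [NormedAddCommGroup V] [InnerProductSpace ℝ V]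
    (Φ : Set V) : Set (Module.End ℝ (V × ℝ)) :=
  {f | ∃ β ∈ Φ, ∃ n : ℤ, f = sAff β (n : ℝ)}

/-- The positive real affine roots `α + nδ` with `n > 0`, or `n = 0` and `α` positive. -/
def PosAffRoots {V : Type*} [NormedAddCommGroup V] [InnerProductSpace ℝ V]
    (Φ : Set V) (Δ : Finset V) : Set (V × ℝ) :=
  {p | p.1 ∈ Φ ∧ (∃ n : ℤ, p.2 = (n : ℝ)) ∧
    (0 < p.2 ∨ (p.2 = 0 ∧ p.1 ∈ PosRoots Φ Δ))}

/-- Length of an element of the affine Weyl group: the number of positive real affine roots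
sent to negative ones. -/
noncomputable def affLength {V : Type*} [NormedAddCommGroup V] [InnerProductSpace ℝ V]
    (Φ : Set V) (Δ : Finset V) (w : Module.End ℝ (V × ℝ)) : ℕ :=
  {p | p ∈ PosAffRoots Φ Δ ∧ -(w p) ∈ PosAffRoots Φ Δ}.ncard

/-- Bruhat order on the affine Weyl group: `u ≤ w` iff `w` is obtained from `u` by a chain of
right multiplications by reflections, each increasing the length. -/
def bruhatLE {V : Type*} [NormedAddCommGroup V] [InnerProductSpace ℝ V]
    (Φ : Set V) (Δ : Finset V) (u w : Module.End ℝ (V × ℝ)) : Prop :=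
  Relation.ReflTransGen
    (fun a b => (∃ t ∈ AffRefls Φ, b = a * t) ∧ affLength Φ Δ a < affLength Φ Δ b) u w

/-- Strict Bruhat order. -/
def bruhatLT {V : Type*} [NormedAddCommGroup V] [InnerProductSpace ℝ V]
    (Φ : Set V) (Δ : Finset V) (u w : Module.End ℝ (V × ℝ)) : Prop :=
  bruhatLE Φ Δ u w ∧ u ≠ w

/-- The simple affine roots `Δ ∪ {δ - θ}`, as elements of `V × ℝδ`. -/
def SimpleAffRoots {V : Type*} [NormedAddCommGroup V] [InnerProductSpace ℝ V]
    (Δ : Finset V) (θ : V) : Set (V × ℝ) :=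
  (fun b => ((b, (0 : ℝ)) : V × ℝ)) '' ↑Δ ∪ {((-θ, (1 : ℝ)) : V × ℝ)}

/-- The Richardson–Springer monoid operation `s ∘ σ` on involutions. -/
noncomputable def rsCirc {V : Type*} [NormedAddCommGroup V] [InnerProductSpace ℝ V]
    (s σ : Module.End ℝ (V × ℝ)) : Module.End ℝ (V × ℝ) :=
  if s * σ = σ * s then s * σ else s * σ * s

/-- The affine root system `Φ̂ = (Φ + ℤδ) ∪ (±ℕδ ∖ {0})`, realized in `V × ℝδ`. -/
def AffRoots {V : Type*} [NormedAddCommGroup V] [InnerProductSpace ℝ V]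
    (Φ : Set V) : Set (V × ℝ) :=
  {p | (p.1 ∈ Φ ∧ ∃ n : ℤ, p.2 = (n : ℝ)) ∨ (p.1 = 0 ∧ ∃ n : ℤ, n ≠ 0 ∧ p.2 = (n : ℝ))}


section Aux

variable {V : Type*} [NormedAddCommGroup V] [InnerProductSpace ℝ V]

lemma sAff_apply' (β : V) (n : ℝ) (p : V × ℝ) :
    sAff β n p = (p.1 - pairing p.1 β • β, p.2 - pairing p.1 β * n) := by
  have : pairing p.1 β = 2 / ⟪β, β⟫ * ⟪β, p.1⟫ := by
    rw [pairing, real_inner_comm]; ring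
  simp [sAff, acoroot, Prod.ext_iff, this]

lemma prod_apply' (S : Finset V)
    (hc : (↑S : Set V).Pairwise fun a b => Commute (sAff a (-1)) (sAff b (-1)))
    (horth : ∀ a ∈ S, ∀ b ∈ S, a ≠ b → ⟪a, b⟫ = 0) (p : V × ℝ) :
    (S.noncommProd (fun β => sAff β (-1)) hc) p =
      (p.1 - ∑ β ∈ S, pairing p.1 β • β, p.2 + ∑ β ∈ S, pairing p.1 β) := by
  classical
  induction S using Finset.induction_on with
  | empty => simp
  | @insert a s ha ih =>
    rw [Finset.noncommProd_insert_of_notMem _ _ _ _ ha]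
    have horth' : ∀ a ∈ s, ∀ b ∈ s, a ≠ b → ⟪a, b⟫ = 0 := fun x hx y hy hxy =>
      horth x (Finset.mem_insert_of_mem hx) y (Finset.mem_insert_of_mem hy) hxy
    rw [Module.End.mul_apply, ih _ horth']
    rw [sAff_apply']
    have key : pairing (p.1 - ∑ β ∈ s, pairing p.1 β • β) a = pairing p.1 a := by
      have hba : ∀ β ∈ s, ⟪β, a⟫ = 0 := fun β hβ =>
        horth β (Finset.mem_insert_of_mem hβ) a (Finset.mem_insert_self a s)
          (fun h => ha (h ▸ hβ))
      have h0 : ⟪∑ β ∈ s, pairing p.1 β • β, a⟫ = (0 : ℝ) := by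
        rw [sum_inner]
        exact Finset.sum_eq_zero fun β hβ => by rw [real_inner_smul_left, hba β hβ, mul_zero]
      rw [pairing, pairing, inner_sub_left, h0, sub_zero]
    rw [key, Finset.sum_insert ha, Finset.sum_insert ha]
    rw [Prod.ext_iff]
    constructor
    · simp only []
      abel
    · simp only []
      ring

lemma not_commute_neg' (a : V) (ha : ⟪a, a⟫ ≠ (0:ℝ)) :
    ¬ Commute (sAff a (-1)) (sAff (-a) (-1)) := by
  intro h
  have p1 : pairing a a = 2 := by rw [pairing]; field_simp
  have p2 : pairing a (-a) = -2 := by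
    rw [pairing, inner_neg_right, inner_neg_neg]; field_simp
  have p3 : pairing (-a) a = -2 := by
    rw [pairing, inner_neg_left]; field_simp
  have p4 : pairing (-a) (-a) = 2 := by
    rw [pairing, inner_neg_neg]; field_simp
  have e1 : sAff (-a) (-1) ((a, 0) : V × ℝ) = (-a, -2) := by
    rw [sAff_apply', p2]; exact Prod.ext_iff.2 ⟨by module, by norm_num⟩
  have e2 : sAff a (-1) ((-a, -2) : V × ℝ) = (a, -4) := by
    rw [sAff_apply', p3]; exact Prod.ext_iff.2 ⟨by module, by norm_num⟩
  have e3 : sAff a (-1) ((a, 0) : V × ℝ) = (-a, 2) := by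
    rw [sAff_apply', p1]; exact Prod.ext_iff.2 ⟨by module, by norm_num⟩
  have e4 : sAff (-a) (-1) ((-a, 2) : V × ℝ) = (a, 4) := by
    rw [sAff_apply', p4]; exact Prod.ext_iff.2 ⟨by module, by norm_num⟩
  have key := LinearMap.congr_fun h ((a, 0) : V × ℝ)
  rw [Module.End.mul_apply, Module.End.mul_apply, e1, e2, e3, e4] at key
  have := congrArg Prod.snd key
  norm_num at this

lemma orth_of_so' (Φ : Set V) (hΦ : IsRootSystem Φ) {a b : V} (haΦ : a ∈ Φ) (hbΦ : b ∈ Φ)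
    (hab : a ≠ b) (hba : b ≠ -a)
    (hs1 : a + b ∉ Φ) (hs2 : a - b ∉ Φ) : ⟪a, b⟫ = 0 := by
  by_contra hne
  have ha0 : a ≠ 0 := hΦ.ne_zero a haΦ
  have hb0 : b ≠ 0 := hΦ.ne_zero b hbΦ
  have hpa : (0:ℝ) < ⟪a, a⟫ := lt_of_le_of_ne real_inner_self_nonneg (inner_self_ne_zero.2 ha0).symm
  have hpb : (0:ℝ) < ⟪b, b⟫ := lt_of_le_of_ne real_inner_self_nonneg (inner_self_ne_zero.2 hb0).symm
  have hna : (0:ℝ) < ‖a‖ := norm_pos_iff.2 ha0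
  have hnb : (0:ℝ) < ‖b‖ := norm_pos_iff.2 hb0
  have h1 : ⟪a, b⟫ < ‖a‖ * ‖b‖ := by
    refine inner_lt_norm_mul_iff_real.2 fun h => ?_
    have hb' : b = (‖b‖ / ‖a‖) • a := by
      rw [div_eq_mul_inv, mul_comm, ← smul_smul, h, smul_smul,
        inv_mul_cancel₀ hna.ne', one_smul]
    rcases hΦ.reduced a haΦ (‖b‖ / ‖a‖) (hb' ▸ hbΦ) with h' | h'
    · rw [h', one_smul] at hb'; exact hab hb'.symm
    · have hpos : (0:ℝ) < ‖b‖ / ‖a‖ := div_pos hnb hna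
      rw [h'] at hpos; norm_num at hpos
  have h2 : -⟪a, b⟫ < ‖a‖ * ‖b‖ := by
    have hiff := inner_lt_norm_mul_iff_real (x := a) (y := -b)
    rw [inner_neg_right, norm_neg] at hiff
    refine hiff.2 fun h => ?_
    have hb' : b = (-(‖b‖ / ‖a‖)) • a := by
      have hnegb : -b = (‖b‖ / ‖a‖) • a := by
        rw [div_eq_mul_inv, mul_comm, ← smul_smul, h, smul_smul,
          inv_mul_cancel₀ hna.ne', one_smul]
      rw [neg_smul, ← hnegb, neg_neg]
    rcases hΦ.reduced a haΦ (-(‖b‖ / ‖a‖)) (hb' ▸ hbΦ) with h' | h'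
    · have hpos : (0:ℝ) < ‖b‖ / ‖a‖ := div_pos hnb hna
      linarith
    · rw [h', neg_one_smul] at hb'; exact hba hb'
  have hCS : ⟪a, b⟫ * ⟪a, b⟫ < ⟪a, a⟫ * ⟪b, b⟫ := by
    have e1 : ⟪a, a⟫ = ‖a‖ * ‖a‖ := real_inner_self_eq_norm_mul_norm a
    have e2 : ⟪b, b⟫ = ‖b‖ * ‖b‖ := real_inner_self_eq_norm_mul_norm b
    nlinarith [h1, h2]
  obtain ⟨m, hm⟩ := hΦ.crystal b hbΦ a haΦ
  obtain ⟨m', hm'⟩ := hΦ.crystal a haΦ b hbΦ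
  have hprod : (m : ℝ) * (m' : ℝ) = 4 * (⟪a, b⟫ * ⟪a, b⟫) / (⟪a, a⟫ * ⟪b, b⟫) := by
    rw [← hm, ← hm', pairing, pairing, real_inner_comm b a]
    field_simp
    ring
  have hx2 : (0:ℝ) < ⟪a, b⟫ * ⟪a, b⟫ := mul_self_pos.2 hne
  have hlt : (m : ℝ) * (m' : ℝ) < 4 := by
    rw [hprod, div_lt_iff₀ (by positivity)]
    nlinarith [hCS]
  have hgt : (0:ℝ) < (m : ℝ) * (m' : ℝ) := by
    rw [hprod]; positivity
  have hz1 : (0:ℤ) < m * m' := by exact_mod_cast hgt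
  have hz2 : m * m' < 4 := by exact_mod_cast hlt
  have hone : m = 1 ∨ m = -1 ∨ m' = 1 ∨ m' = -1 := by
    by_contra h
    push_neg at h
    obtain ⟨h1', h2', h3', h4'⟩ := h
    have hm0 : m ≠ 0 := by rintro rfl; omega
    have hm'0 : m' ≠ 0 := by rintro rfl; omega
    have e1 : 2 ≤ m.natAbs := by omega
    have e2 : 2 ≤ m'.natAbs := by omega
    have e3 : 4 ≤ m.natAbs * m'.natAbs := Nat.mul_le_mul e1 e2
    rw [← Int.natAbs_mul] at e3
    omega
  rcases hone with h | h | h | h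
  · have hr := hΦ.reflect_mem b hbΦ a haΦ
    rw [hm, h] at hr; push_cast at hr; rw [one_smul] at hr
    exact hs2 hr
  · have hr := hΦ.reflect_mem b hbΦ a haΦ
    rw [hm, h] at hr; push_cast at hr; rw [neg_one_smul, sub_neg_eq_add] at hr
    exact hs1 hr
  · have hr := hΦ.reflect_mem a haΦ b hbΦ
    rw [hm', h] at hr; push_cast at hr; rw [one_smul] at hr
    have hr2 := hΦ.neg_mem _ hr
    rw [neg_sub] at hr2
    exact hs2 hr2
  · have hr := hΦ.reflect_mem a haΦ b hbΦ
    rw [hm', h] at hr; push_cast at hr; rw [neg_one_smul, sub_neg_eq_add, add_comm] at hr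
    exact hs1 hr

end Aux

/-- if `S ⊆ Φ` is strongly orthogonal with `height(e_S) ≤ 3` and
`σ_Ŝ(α) = -α` for an affine root `α`, where `Ŝ = {β - δ : β ∈ S}`, then
`α = ½(±β ± β′)` with `β, β′ ∈ Ŝ`. -/
theorem stmt5 {V : Type*} [NormedAddCommGroup V] [InnerProductSpace ℝ V]
    (Φ : Set V) (hΦ : IsRootSystem Φ)
    (S : Finset V) (hSΦ : ↑S ⊆ Φ) (hso : StronglyOrthogonal Φ ↑S)
    (hheight : ∀ η ∈ Φ, ∑ β ∈ S, |pairing η β| ≤ 3)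
    (hc : (↑S : Set V).Pairwise fun a b => Commute (sAff a (-1)) (sAff b (-1)))
    (α : V × ℝ) (hα : α ∈ AffRoots Φ)
    (hfix : (S.noncommProd (fun β => sAff β (-1)) hc) α = -α) :
    ∃ β ∈ S, ∃ β' ∈ S, ∃ ε ε' : ℝ, (ε = 1 ∨ ε = -1) ∧ (ε' = 1 ∨ ε' = -1) ∧
      α = (1 / 2 : ℝ) • (ε • ((β, (-1 : ℝ)) : V × ℝ) + ε' • ((β', (-1 : ℝ)) : V × ℝ)) := by
  classical
  have horth : ∀ x ∈ S, ∀ y ∈ S, x ≠ y → ⟪x, y⟫ = 0 := by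
    intro x hx y hy hxy
    by_cases hyx : y = -x
    · exfalso
      subst hyx
      exact not_commute_neg' x (inner_self_ne_zero.2 (hΦ.ne_zero x (hSΦ hx)))
        (hc (Finset.mem_coe.2 hx) (Finset.mem_coe.2 hy) hxy)
    · exact orth_of_so' Φ hΦ (hSΦ hx) (hSΦ hy) hxy hyx
        (hso x (Finset.mem_coe.2 hx) y (Finset.mem_coe.2 hy) hxy).1
        (hso x (Finset.mem_coe.2 hx) y (Finset.mem_coe.2 hy) hxy).2
  rw [prod_apply' S hc horth α] at hfix
  have e1 : α.1 - ∑ β ∈ S, pairing α.1 β • β = -α.1 := congrArg Prod.fst hfix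
  have e2 : α.2 + ∑ β ∈ S, pairing α.1 β = -α.2 := congrArg Prod.snd hfix
  rcases hα with ⟨hv, n, hn⟩ | ⟨hv0, n, hn0, hn⟩
  · -- real affine root
    choose! c hcv using fun β (hβ : β ∈ S) => hΦ.crystal β (hSΦ hβ) α.1 hv
    have hrw1 : ∑ β ∈ S, pairing α.1 β • β = ∑ β ∈ S, ((c β : ℝ)) • β :=
      Finset.sum_congr rfl fun β hβ => by rw [hcv β hβ]
    have hrw2 : ∑ β ∈ S, pairing α.1 β = ∑ β ∈ S, ((c β : ℝ)) :=
      Finset.sum_congr rfl fun β hβ => by rw [hcv β hβ]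
    have hsum1 : ∑ β ∈ S, ((c β : ℝ)) • β = (2 : ℝ) • α.1 := by
      rw [← hrw1]
      have := e1
      rw [sub_eq_iff_eq_add] at this
      rw [← sub_eq_iff_eq_add'] at this
      rw [← this]; module
    have hsumc : ∑ β ∈ S, c β = -2 * n := by
      have : (↑(∑ β ∈ S, c β) : ℝ) = -2 * n := by
        push_cast
        rw [← hrw2]
        have := e2
        rw [hn] at this
        linarith
      exact_mod_cast this
    have hheight' : ∑ β ∈ S, |c β| ≤ 3 := by
      have h3 := hheight α.1 hv
      have : (↑(∑ β ∈ S, |c β|) : ℝ) ≤ 3 := by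
        push_cast
        rw [show ∑ β ∈ S, |(c β : ℝ)| = ∑ β ∈ S, |pairing α.1 β| from
          Finset.sum_congr rfl fun β hβ => by rw [hcv β hβ]]
        exact h3
      exact_mod_cast this
    have habs_nonneg : (0:ℤ) ≤ ∑ β ∈ S, |c β| := Finset.sum_nonneg fun β _ => abs_nonneg _
    have hpar : (2:ℤ) ∣ ∑ β ∈ S, |c β| := by
      have hd : (2:ℤ) ∣ ∑ β ∈ S, (|c β| - c β) := by
        refine Finset.dvd_sum fun β _ => ?_
        rcases abs_choice (c β) with h | h <;> rw [h] <;> ring_nf <;> omega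
      rw [Finset.sum_sub_distrib, hsumc] at hd
      omega
    have hv0' : α.1 ≠ 0 := hΦ.ne_zero α.1 hv
    have hne_zero : ∑ β ∈ S, |c β| ≠ 0 := by
      intro h0
      have hall : ∀ β ∈ S, c β = 0 := by
        intro β hβ
        exact abs_eq_zero.1 ((Finset.sum_eq_zero_iff_of_nonneg fun β _ => abs_nonneg (c β)).1 h0 β hβ)
      have : ∑ β ∈ S, ((c β : ℝ)) • β = 0 :=
        Finset.sum_eq_zero fun β hβ => by rw [hall β hβ]; simp
      rw [hsum1] at this
      exact hv0' (by simpa using smul_eq_zero.1 this |>.resolve_left (by norm_num))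
    have hsum2 : ∑ β ∈ S, |c β| = 2 := by omega
    obtain ⟨β1, hβ1, hc1⟩ : ∃ β1 ∈ S, c β1 ≠ 0 := by
      by_contra h
      push_neg at h
      exact hne_zero (Finset.sum_eq_zero fun β hβ => by rw [h β hβ]; simp)
    have hle1 : |c β1| ≤ 2 := by
      rw [← hsum2]
      exact Finset.single_le_sum (fun β _ => abs_nonneg (c β)) hβ1
    have herase : ∑ β ∈ S.erase β1, |c β| = 2 - |c β1| := by
      have h' := Finset.add_sum_erase S (fun β => |c β|) hβ1
      omega
    have hnn1 := abs_nonneg (c β1)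
    have habs_pos : 1 ≤ |c β1| := by
      rcases abs_choice (c β1) with h | h <;> omega
    rcases (by omega : |c β1| = 2 ∨ |c β1| = 1) with habs2 | habs1
    · -- single root with coefficient ±2
      have hcpm : c β1 = 2 ∨ c β1 = -2 := by
        rcases abs_choice (c β1) with h | h <;> omega
      have hz : ∀ b ∈ S, b ≠ β1 → c b = 0 := by
        intro b hb hbne
        have hmem : b ∈ S.erase β1 := Finset.mem_erase.2 ⟨hbne, hb⟩
        have h0 : ∑ β ∈ S.erase β1, |c β| = 0 := by omega
        exact abs_eq_zero.1
          ((Finset.sum_eq_zero_iff_of_nonneg fun β _ => abs_nonneg (c β)).1 h0 b hmem)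
      have hsingle : ∑ β ∈ S, ((c β : ℝ)) • β = ((c β1 : ℝ)) • β1 :=
        Finset.sum_eq_single_of_mem β1 hβ1 fun b hb hbne => by rw [hz b hb hbne]; simp
      have hsumc1 : ∑ β ∈ S, c β = c β1 :=
        Finset.sum_eq_single_of_mem β1 hβ1 fun b hb hbne => hz b hb hbne
      refine ⟨β1, hβ1, β1, hβ1, (c β1 : ℝ) / 2, (c β1 : ℝ) / 2, ?_, ?_, ?_⟩
      · rcases hcpm with h | h <;> rw [h] <;> norm_num
      · rcases hcpm with h | h <;> rw [h] <;> norm_num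
      · have hα1 : (2:ℝ) • α.1 = ((c β1 : ℝ)) • β1 := by rw [← hsum1, hsingle]
        have hα2 : α.2 = -(c β1 : ℝ) / 2 := by
          have hcast : (c β1 : ℝ) = -2 * n := by exact_mod_cast hsumc1 ▸ hsumc
          rw [hn, hcast]; ring
        have hh : α.1 = ((c β1 : ℝ) / 2) • β1 := by
          refine smul_right_injective V (by norm_num : (2:ℝ) ≠ 0) ?_
          show (2:ℝ) • α.1 = (2:ℝ) • (((c β1 : ℝ) / 2) • β1)
          rw [hα1, smul_smul]
          congr 1
          ring
        rw [Prod.ext_iff]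
        constructor
        · show α.1 = _
          simp only [Prod.smul_mk, Prod.mk_add_mk, Prod.fst]
          rw [hh]
          module
        · show α.2 = _
          simp only [Prod.smul_mk, Prod.mk_add_mk, Prod.snd, smul_eq_mul]
          rw [hα2]; ring
    · -- two roots with coefficients ±1
      have herase1 : ∑ β ∈ S.erase β1, |c β| = 1 := by omega
      obtain ⟨β2, hβ2e, hc2⟩ : ∃ β2 ∈ S.erase β1, c β2 ≠ 0 := by
        by_contra h
        push_neg at h
        have h0 : ∑ β ∈ S.erase β1, |c β| = 0 :=
          Finset.sum_eq_zero fun β hβ => by rw [h β hβ]; simp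
        omega
      have hβ2 : β2 ∈ S := Finset.mem_of_mem_erase hβ2e
      have hne12 : β2 ≠ β1 := (Finset.mem_erase.1 hβ2e).1
      have hnn2 := abs_nonneg (c β2)
      have hle2 : |c β2| ≤ 1 := by
        rw [← herase1]
        exact Finset.single_le_sum (fun β _ => abs_nonneg (c β)) hβ2e
      have hcpm1 : c β1 = 1 ∨ c β1 = -1 := by
        rcases abs_choice (c β1) with h | h <;> omega
      have hcpm2 : c β2 = 1 ∨ c β2 = -1 := by
        rcases abs_choice (c β2) with h | h <;> omega
      have habs2' : |c β2| = 1 := by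
        rcases abs_choice (c β2) with h | h <;> omega
      have hz : ∀ b ∈ S, b ≠ β1 → b ≠ β2 → c b = 0 := by
        intro b hb h1' h2'
        have hmem : b ∈ (S.erase β1).erase β2 :=
          Finset.mem_erase.2 ⟨h2', Finset.mem_erase.2 ⟨h1', hb⟩⟩
        have h0 : ∑ β ∈ (S.erase β1).erase β2, |c β| = 0 := by
          have h' := Finset.add_sum_erase (S.erase β1) (fun β => |c β|) hβ2e
          omega
        exact abs_eq_zero.1
          ((Finset.sum_eq_zero_iff_of_nonneg fun β _ => abs_nonneg (c β)).1 h0 b hmem)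
      have t3 : ∑ β ∈ (S.erase β1).erase β2, ((c β : ℝ)) • β = 0 :=
        Finset.sum_eq_zero fun b hb => by
          rw [hz b (Finset.mem_of_mem_erase (Finset.mem_of_mem_erase hb))
            (Finset.mem_erase.1 (Finset.mem_of_mem_erase hb)).1 (Finset.mem_erase.1 hb).1]
          simp
      have t3' : ∑ β ∈ (S.erase β1).erase β2, c β = 0 :=
        Finset.sum_eq_zero fun b hb =>
          hz b (Finset.mem_of_mem_erase (Finset.mem_of_mem_erase hb))
            (Finset.mem_erase.1 (Finset.mem_of_mem_erase hb)).1 (Finset.mem_erase.1 hb).1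
      have hsplit : ∑ β ∈ S, ((c β : ℝ)) • β = (c β1 : ℝ) • β1 + (c β2 : ℝ) • β2 := by
        rw [← Finset.add_sum_erase S (fun β => ((c β : ℝ)) • β) hβ1,
          ← Finset.add_sum_erase (S.erase β1) (fun β => ((c β : ℝ)) • β) hβ2e, t3, add_zero]
      have hsplitc : ∑ β ∈ S, c β = c β1 + c β2 := by
        rw [← Finset.add_sum_erase S c hβ1, ← Finset.add_sum_erase (S.erase β1) c hβ2e, t3',
          add_zero]
      refine ⟨β1, hβ1, β2, hβ2, (c β1 : ℝ), (c β2 : ℝ), ?_, ?_, ?_⟩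
      · rcases hcpm1 with h | h <;> rw [h] <;> norm_num
      · rcases hcpm2 with h | h <;> rw [h] <;> norm_num
      · have hα1 : (2:ℝ) • α.1 = (c β1 : ℝ) • β1 + (c β2 : ℝ) • β2 := by
          rw [← hsum1, hsplit]
        have hα2 : α.2 = -((c β1 : ℝ) + (c β2 : ℝ)) / 2 := by
          have hcast : (c β1 : ℝ) + (c β2 : ℝ) = -2 * n := by
            exact_mod_cast hsplitc ▸ hsumc
          rw [hn, hcast]; ring
        have hh : α.1 = (2:ℝ)⁻¹ • ((c β1 : ℝ) • β1 + (c β2 : ℝ) • β2) := by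
          refine smul_right_injective V (by norm_num : (2:ℝ) ≠ 0) ?_
          show (2:ℝ) • α.1 = (2:ℝ) • ((2:ℝ)⁻¹ • ((c β1 : ℝ) • β1 + (c β2 : ℝ) • β2))
          rw [hα1, smul_smul]
          norm_num
        rw [Prod.ext_iff]
        constructor
        · show α.1 = _
          simp only [Prod.smul_mk, Prod.mk_add_mk, Prod.fst]
          rw [hh]
          module
        · show α.2 = _
          simp only [Prod.smul_mk, Prod.mk_add_mk, Prod.snd, smul_eq_mul]
          rw [hα2]; ring
  · -- imaginary root: contradiction
    exfalso
    have hz : ∑ β ∈ S, pairing α.1 β = 0 :=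
      Finset.sum_eq_zero fun β hβ => by rw [hv0, pairing, inner_zero_left]; ring_nf
    rw [hz, add_zero] at e2
    have : α.2 = 0 := by linarith
    rw [hn] at this
    exact hn0 (by exact_mod_cast this)
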